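/- Let Z be an m×n Young diagram with dynamical indices d = (d₁,…,d_m). A left-aligned array Y ∈ 𝒴(m,n) with the same dynamical indices is an admissible numbered Young diagram if and only if there exists an m×m permutation matrix Π such that, when the columns of Π·Y_r are stacked into an nm-vector (where Y_r is the right-aligned version of Y, shifting each row i right by n−dᵢ positions) and the zero entries are deleted, the resulting vector is (1,2,…,n). -/

import Mathlib

section stmt10aux

variable {m n : ℕ} {d : Fin m → ℕ} {Y : Fin m → ℕ → ℕ}

/-- Every valid position of `Y` holds a value in `[1, n]`. -/
lemma stmt10_valRange (hd : ∑ i, d i = n)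
    (hYnum : ∀ v, 1 ≤ v → v ≤ n →
      ∃! p : Fin m × ℕ, 1 ≤ p.2 ∧ p.2 ≤ d p.1 ∧ Y p.1 p.2 = v) :
    ∀ i j, 1 ≤ j → j ≤ d i → 1 ≤ Y i j ∧ Y i j ≤ n := by
  classical
  intro i j hj1 hj2
  set P : Finset (Fin m × ℕ) :=
    Finset.univ.biUnion (fun i => (Finset.Icc 1 (d i)).image (fun j => (i, j))) with hP
  have hmemP : ∀ p : Fin m × ℕ, p ∈ P ↔ 1 ≤ p.2 ∧ p.2 ≤ d p.1 := by
    intro p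
    constructor
    · intro hp
      simp only [hP, Finset.mem_biUnion, Finset.mem_image, Finset.mem_Icc, Finset.mem_univ,
        true_and] at hp
      obtain ⟨a, b, hb, rfl⟩ := hp
      exact hb
    · intro hp
      simp only [hP, Finset.mem_biUnion, Finset.mem_image, Finset.mem_Icc, Finset.mem_univ,
        true_and]
      exact ⟨p.1, p.2, hp, Prod.mk.eta⟩
  have hcardP : P.card = n := by
    rw [hP, Finset.card_biUnion]
    · rw [← hd]
      refine Finset.sum_congr rfl (fun i _ => ?_)
      rw [Finset.card_image_of_injective _ (fun a b h => by simpa using h), Nat.card_Icc]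
      omega
    · intro x _ y _ hxy
      rw [Function.onFun, Finset.disjoint_left]
      intro p hp hq
      simp only [Finset.mem_image, Finset.mem_Icc] at hp hq
      obtain ⟨b, _, rfl⟩ := hp
      obtain ⟨c, _, hc⟩ := hq
      exact hxy (congrArg Prod.fst hc).symm
  have hex : ∀ v, 1 ≤ v → v ≤ n → ∃ p : Fin m × ℕ, 1 ≤ p.2 ∧ p.2 ≤ d p.1 ∧ Y p.1 p.2 = v :=
    fun v h1 h2 => (hYnum v h1 h2).exists
  choose g hg1 hg2 hg3 using hex
  have hsurj := Finset.surj_on_of_inj_on_of_card_le (s := Finset.Icc 1 n) (t := P)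
    (fun v hv => g v (Finset.mem_Icc.mp hv).1 (Finset.mem_Icc.mp hv).2)
    (fun v hv => (hmemP _).mpr
      ⟨hg1 v (Finset.mem_Icc.mp hv).1 (Finset.mem_Icc.mp hv).2,
       hg2 v (Finset.mem_Icc.mp hv).1 (Finset.mem_Icc.mp hv).2⟩)
    (fun v w hv hw hEq => by
      have h3v := hg3 v (Finset.mem_Icc.mp hv).1 (Finset.mem_Icc.mp hv).2
      have h3w := hg3 w (Finset.mem_Icc.mp hw).1 (Finset.mem_Icc.mp hw).2
      have hEq' : g v (Finset.mem_Icc.mp hv).1 (Finset.mem_Icc.mp hv).2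
          = g w (Finset.mem_Icc.mp hw).1 (Finset.mem_Icc.mp hw).2 := hEq
      rw [hEq'] at h3v
      exact h3v.symm.trans h3w)
    (by rw [hcardP, Nat.card_Icc]; omega)
  obtain ⟨v, hv, hpv⟩ := hsurj (i, j) ((hmemP _).mpr ⟨hj1, hj2⟩)
  have hpv' : (i, j) = g v (Finset.mem_Icc.mp hv).1 (Finset.mem_Icc.mp hv).2 := hpv
  have h3 := hg3 v (Finset.mem_Icc.mp hv).1 (Finset.mem_Icc.mp hv).2
  rw [← hpv'] at h3
  have h4 : Y i j = v := h3
  rw [Finset.mem_Icc] at hv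
  omega

/-- Any non-terminal entry is smaller than any end-of-row entry. -/
lemma stmt10_top (hd : ∑ i, d i = n) (hdle : ∀ i, d i ≤ n)
    (hsupp : ∀ (i : Fin m) (j : ℕ), Y i j ≠ 0 ↔ (1 ≤ j ∧ j ≤ d i))
    (hYnum : ∀ v, 1 ≤ v → v ≤ n →
      ∃! p : Fin m × ℕ, 1 ≤ p.2 ∧ p.2 ≤ d p.1 ∧ Y p.1 p.2 = v)
    (hii : ∀ v, n - (Finset.univ.filter (fun i : Fin m => 0 < d i)).card + 1 ≤ v → v ≤ n →
      ∃ (i : Fin m) (j : ℕ), 1 ≤ j ∧ j ≤ n ∧ Y i j = v ∧ ∀ j', j < j' → Y i j' = 0) :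
    ∀ (i i' : Fin m) (j : ℕ), 1 ≤ j → j < d i → 1 ≤ d i' → Y i j < Y i' (d i') := by
  classical
  intro i i' j hj1 hj2 hi'
  set pB := (Finset.univ.filter (fun i : Fin m => 0 < d i)).card with hpBdef
  have hpB1 : 1 ≤ pB := by
    rw [hpBdef]
    exact Finset.card_pos.mpr ⟨i', Finset.mem_filter.mpr ⟨Finset.mem_univ _, hi'⟩⟩
  have hpBn : pB ≤ n := by
    rw [hpBdef, ← hd]
    calc (Finset.univ.filter (fun i : Fin m => 0 < d i)).card
        = ∑ _x ∈ Finset.univ.filter (fun i : Fin m => 0 < d i), 1 := Finset.card_eq_sum_ones _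
      _ ≤ ∑ x ∈ Finset.univ.filter (fun i : Fin m => 0 < d i), d x :=
          Finset.sum_le_sum (fun x hx => (Finset.mem_filter.mp hx).2)
      _ ≤ ∑ x, d x := Finset.sum_le_sum_of_subset (Finset.filter_subset _ _)
  have hex : ∀ v, n - pB + 1 ≤ v → v ≤ n → ∃ r : Fin m, 1 ≤ d r ∧ Y r (d r) = v := by
    intro v h1 h2
    obtain ⟨a, b, hb1, hbn, hab, hlast⟩ := hii v h1 h2
    have hv1 : v ≠ 0 := by omega
    have hb2 : b ≤ d a := ((hsupp a b).mp (by rw [hab]; exact hv1)).2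
    have hbd : b = d a := by
      by_contra hne
      have hz : Y a (b + 1) ≠ 0 := (hsupp a (b + 1)).mpr ⟨by omega, by omega⟩
      exact hz (hlast (b + 1) (by omega))
    exact ⟨a, by omega, by rw [← hbd]; exact hab⟩
  choose f hf1 hf2 using hex
  have hT : (Finset.Icc (n - pB + 1) n).card = pB := by rw [Nat.card_Icc]; omega
  have hsurj := Finset.surj_on_of_inj_on_of_card_le
    (s := Finset.Icc (n - pB + 1) n)
    (t := Finset.univ.filter (fun i : Fin m => 0 < d i))
    (fun v hv => f v (Finset.mem_Icc.mp hv).1 (Finset.mem_Icc.mp hv).2)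
    (fun v hv => by
      have h1 := hf1 v (Finset.mem_Icc.mp hv).1 (Finset.mem_Icc.mp hv).2
      exact Finset.mem_filter.mpr ⟨Finset.mem_univ _, h1⟩)
    (fun v w hv hw hEq => by
      have h3v := hf2 v (Finset.mem_Icc.mp hv).1 (Finset.mem_Icc.mp hv).2
      have h3w := hf2 w (Finset.mem_Icc.mp hw).1 (Finset.mem_Icc.mp hw).2
      have hEq' : f v (Finset.mem_Icc.mp hv).1 (Finset.mem_Icc.mp hv).2
          = f w (Finset.mem_Icc.mp hw).1 (Finset.mem_Icc.mp hw).2 := hEq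
      rw [hEq'] at h3v
      exact h3v.symm.trans h3w)
    (by rw [hT, ← hpBdef])
  obtain ⟨w, hw, hfw⟩ := hsurj i' (Finset.mem_filter.mpr ⟨Finset.mem_univ _, hi'⟩)
  have hfw' : i' = f w (Finset.mem_Icc.mp hw).1 (Finset.mem_Icc.mp hw).2 := hfw
  have hYi' : Y i' (d i') = w := by
    have h3 := hf2 w (Finset.mem_Icc.mp hw).1 (Finset.mem_Icc.mp hw).2
    rw [← hfw'] at h3
    exact h3
  rw [Finset.mem_Icc] at hw
  have hu := stmt10_valRange hd hYnum i j hj1 (le_of_lt hj2)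
  have hun : Y i j ≤ n - pB := by
    by_contra hcon
    have hmem : n - pB + 1 ≤ Y i j := by omega
    obtain ⟨r, hr1, hr2⟩ : ∃ r : Fin m, 1 ≤ d r ∧ Y r (d r) = Y i j :=
      ⟨f (Y i j) hmem hu.2, hf1 _ _ _, hf2 _ _ _⟩
    have pa : 1 ≤ j ∧ j ≤ d i ∧ Y i j = Y i j := ⟨hj1, le_of_lt hj2, rfl⟩
    have pb : 1 ≤ d r ∧ d r ≤ d r ∧ Y r (d r) = Y i j := ⟨hr1, le_rfl, hr2⟩
    have huniq : (i, j) = (r, d r) := (hYnum (Y i j) hu.1 hu.2).unique pa pb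
    have h1 : i = r := congrArg Prod.fst huniq
    have h2 : j = d r := congrArg Prod.snd huniq
    rw [h1] at hj2
    omega
  omega

/-- The main comparison lemma: lexicographically earlier nonzero entries of the
right-aligned array are smaller. -/
lemma stmt10_main (hd : ∑ i, d i = n) (hdle : ∀ i, d i ≤ n)
    (hsupp : ∀ (i : Fin m) (j : ℕ), Y i j ≠ 0 ↔ (1 ≤ j ∧ j ≤ d i))
    (hYnum : ∀ v, 1 ≤ v → v ≤ n →
      ∃! p : Fin m × ℕ, 1 ≤ p.2 ∧ p.2 ≤ d p.1 ∧ Y p.1 p.2 = v)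
    (hii : ∀ v, n - (Finset.univ.filter (fun i : Fin m => 0 < d i)).card + 1 ≤ v → v ≤ n →
      ∃ (i : Fin m) (j : ℕ), 1 ≤ j ∧ j ≤ n ∧ Y i j = v ∧ ∀ j', j < j' → Y i j' = 0)
    (hiii : ∀ (i i' : Fin m) (j j' : ℕ), 1 ≤ j → 1 ≤ j' →
        Y i' (j' + 1) < Y i (j + 1) → 0 < Y i' (j' + 1) →
        (0 < Y i' j' ∧ Y i' j' < Y i j)) :
    ∀ (k : ℕ) (i i' : Fin m) (j j' : ℕ), 1 ≤ j → j ≤ d i → 1 ≤ j' → j' ≤ d i' →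
      d i' - j' ≤ k →
      (j + (n - d i) < j' + (n - d i') ∨
        (j + (n - d i) = j' + (n - d i') ∧ Y i (d i) < Y i' (d i'))) →
      Y i j < Y i' j' := by
  intro k
  induction k with
  | zero =>
    intro i i' j j' h1 h2 h3 h4 h5 h6
    have hdi := hdle i; have hdi' := hdle i'
    have hj' : j' = d i' := by omega
    subst hj'
    rcases h6 with h6 | h6
    · exact stmt10_top hd hdle hsupp hYnum hii i i' j h1 (by omega) h3
    · have hj : j = d i := by omega
      rw [hj]; exact h6.2
  | succ k ih =>
    intro i i' j j' h1 h2 h3 h4 h5 h6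
    have hdi := hdle i; have hdi' := hdle i'
    by_cases hj' : j' = d i'
    · subst hj'
      rcases h6 with h6 | h6
      · exact stmt10_top hd hdle hsupp hYnum hii i i' j h1 (by omega) h3
      · have hj : j = d i := by omega
        rw [hj]; exact h6.2
    · have hj'lt : j' < d i' := by omega
      have hjlt : j < d i := by rcases h6 with h6 | h6 <;> omega
      have hnext : Y i (j + 1) < Y i' (j' + 1) := by
        apply ih i i' (j + 1) (j' + 1) (by omega) (by omega) (by omega) (by omega) (by omega)
        rcases h6 with h6 | h6
        · left; omega
        · right; exact ⟨by omega, h6.2⟩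
      have hpos : 0 < Y i (j + 1) := by
        have h := (hsupp i (j + 1)).mpr ⟨by omega, by omega⟩
        omega
      exact (hiii i' i j' j h3 h1 hnext hpos).2

end stmt10aux

/-- A left-aligned numbered array `Y` with dynamical indices `d` is an admissible numbered
Young diagram iff some permutation `Π` of the rows of the right-aligned version `Y_r`
makes the nonzero entries, read in column-major order, appear as `1, 2, …, n`. -/
theorem stmt10 (m n : ℕ) (d : Fin m → ℕ) (hd : ∑ i, d i = n) (hdle : ∀ i, d i ≤ n)
    (pB : ℕ) (hpB : pB = (Finset.univ.filter (fun i : Fin m => 0 < d i)).card)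
    (Y : Fin m → ℕ → ℕ)
    (hsupp : ∀ (i : Fin m) (j : ℕ), Y i j ≠ 0 ↔ (1 ≤ j ∧ j ≤ d i))
    (hYnum : ∀ v, 1 ≤ v → v ≤ n →
      ∃! p : Fin m × ℕ, 1 ≤ p.2 ∧ p.2 ≤ d p.1 ∧ Y p.1 p.2 = v)
    -- the right-aligned version of `Y`
    (Yr : Fin m → ℕ → ℕ)
    (hYr : ∀ (i : Fin m) (j : ℕ),
      Yr i j = if n - d i < j ∧ j ≤ n then Y i (j - (n - d i)) else 0) :
    -- admissibility of `Y` ((ii) and (iii); left-alignedness (i) holds by `hsupp`)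
    ((∀ v, n - pB + 1 ≤ v → v ≤ n →
        ∃ (i : Fin m) (j : ℕ), 1 ≤ j ∧ j ≤ n ∧ Y i j = v ∧ ∀ j', j < j' → Y i j' = 0) ∧
     (∀ (i i' : Fin m) (j j' : ℕ), 1 ≤ j → 1 ≤ j' →
        Y i' (j' + 1) < Y i (j + 1) → 0 < Y i' (j' + 1) →
        (0 < Y i' j' ∧ Y i' j' < Y i j)))
    ↔ ∃ σ : Equiv.Perm (Fin m),
        ∀ (i i' : Fin m) (j j' : ℕ), 1 ≤ j → j ≤ n → 1 ≤ j' → j' ≤ n →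
          Yr (σ i) j ≠ 0 → Yr (σ i') j' ≠ 0 →
          (j < j' ∨ (j = j' ∧ i < i')) → Yr (σ i) j < Yr (σ i') j' := by
  classical
  constructor
  · rintro ⟨hii', hiii⟩
    subst hpB
    have hcond : ∀ (r : Fin m) (c : ℕ), Yr r c ≠ 0 →
        n - d r < c ∧ c ≤ n ∧ 1 ≤ c - (n - d r) ∧ c - (n - d r) ≤ d r ∧
          Y r (c - (n - d r)) = Yr r c := by
      intro r c h
      by_cases hc : n - d r < c ∧ c ≤ n
      · rw [hYr r c, if_pos hc] at h
        have h2 := (hsupp r (c - (n - d r))).mp h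
        exact ⟨hc.1, hc.2, h2.1, h2.2, by rw [hYr r c, if_pos hc]⟩
      · rw [hYr r c, if_neg hc] at h
        exact absurd rfl h
    set key : Fin m → ℕ ×ₗ Fin m := fun i => toLex (Y i (d i), i) with hkey
    have hkeyinj : Function.Injective key := by
      intro a b hab
      rw [hkey] at hab
      simpa using congrArg (fun x => (ofLex x).2) hab
    have hmono : StrictMono (key ∘ Tuple.sort key) :=
      (Tuple.monotone_sort key).strictMono_of_injective
        (hkeyinj.comp (Tuple.sort key).injective)
    refine ⟨Tuple.sort key, ?_⟩
    intro i i' j j' hj1 hjn hj'1 hj'n hne hne' hlex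
    set r := Tuple.sort key i with hr
    set r' := Tuple.sort key i' with hr'
    obtain ⟨hc1, hc2, ha1, ha2, hval⟩ := hcond r j hne
    obtain ⟨hc1', hc2', ha1', ha2', hval'⟩ := hcond r' j' hne'
    rw [← hval, ← hval']
    have hdr := hdle r; have hdr' := hdle r'
    have hor : (j - (n - d r)) + (n - d r) < (j' - (n - d r')) + (n - d r') ∨
        ((j - (n - d r)) + (n - d r) = (j' - (n - d r')) + (n - d r') ∧
          Y r (d r) < Y r' (d r')) := by
      rcases hlex with hlt | ⟨hjj, hii2⟩
      · left; omega
      · right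
        refine ⟨by omega, ?_⟩
        have hk : key r < key r' := hmono hii2
        simp only [hkey, Prod.Lex.lt_iff] at hk
        rcases hk with hk | ⟨hk1, hk2⟩
        · exact hk
        · exfalso
          have h1v := stmt10_valRange hd hYnum r (d r) (by omega) le_rfl
          have pa : 1 ≤ d r ∧ d r ≤ d r ∧ Y r (d r) = Y r (d r) := ⟨by omega, le_rfl, rfl⟩
          have pb : 1 ≤ d r' ∧ d r' ≤ d r' ∧ Y r' (d r') = Y r (d r) :=
            ⟨by omega, le_rfl, hk1.symm⟩
          have huniq : (r, d r) = (r', d r') := (hYnum (Y r (d r)) h1v.1 h1v.2).unique pa pb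
          have : r = r' := congrArg Prod.fst huniq
          exact absurd this (ne_of_lt hk2)
    exact stmt10_main hd hdle hsupp hYnum hii' hiii (d r' - (j' - (n - d r'))) r r'
      (j - (n - d r)) (j' - (n - d r')) ha1 ha2 ha1' ha2' le_rfl hor
  · rintro ⟨σ, H⟩
    have Hy : ∀ (r r' : Fin m) (a a' : ℕ), 1 ≤ a → a ≤ d r → 1 ≤ a' → a' ≤ d r' →
        (a + (n - d r) < a' + (n - d r') ∨
          (a + (n - d r) = a' + (n - d r') ∧ σ.symm r < σ.symm r')) →
        Y r a < Y r' a' := by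
      intro r r' a a' h1 h2 h3 h4 h5
      have hdr := hdle r; have hdr' := hdle r'
      have hcnd : n - d r < a + (n - d r) ∧ a + (n - d r) ≤ n := ⟨by omega, by omega⟩
      have hcnd' : n - d r' < a' + (n - d r') ∧ a' + (n - d r') ≤ n := ⟨by omega, by omega⟩
      have e1 : Yr r (a + (n - d r)) = Y r a := by
        rw [hYr, if_pos hcnd]
        congr 1
        omega
      have e1' : Yr r' (a' + (n - d r')) = Y r' a' := by
        rw [hYr, if_pos hcnd']
        congr 1
        omega
      have hne : Y r a ≠ 0 := (hsupp r a).mpr ⟨h1, h2⟩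
      have hne' : Y r' a' ≠ 0 := (hsupp r' a').mpr ⟨h3, h4⟩
      have h := H (σ.symm r) (σ.symm r') (a + (n - d r)) (a' + (n - d r'))
        (by omega) (by omega) (by omega) (by omega)
        (by rw [Equiv.apply_symm_apply, e1]; exact hne)
        (by rw [Equiv.apply_symm_apply, e1']; exact hne')
        h5
      rw [Equiv.apply_symm_apply, Equiv.apply_symm_apply, e1, e1'] at h
      exact h
    constructor
    · -- condition (ii)
      intro v hv1 hv2
      have hv0 : 1 ≤ v := by omega
      obtain ⟨⟨i₀, j₀⟩, hp, -⟩ := hYnum v hv0 hv2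
      have hj1 : 1 ≤ j₀ := hp.1
      have hj2 : j₀ ≤ d i₀ := hp.2.1
      have hYv : Y i₀ j₀ = v := hp.2.2
      by_cases hend : j₀ = d i₀
      · refine ⟨i₀, j₀, hj1, le_trans hj2 (hdle i₀), hYv, ?_⟩
        intro j' hj'
        by_contra h
        have h2 := (hsupp i₀ j').mp h
        omega
      · exfalso
        have hj₀lt : j₀ < d i₀ := lt_of_le_of_ne hj2 hend
        set E := Finset.univ.filter (fun i : Fin m => 0 < d i) with hE
        have hEcard : E.card = pB := by rw [hE, hpB]
        have hsub : E.image (fun i => Y i (d i)) ⊆ Finset.Ioc v n := by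
          intro w hw
          simp only [Finset.mem_image] at hw
          obtain ⟨r, hrmem, rfl⟩ := hw
          have hr : 0 < d r := by
            have := Finset.mem_filter.mp (hE ▸ hrmem)
            exact this.2
          have hrange := stmt10_valRange hd hYnum r (d r) hr le_rfl
          rw [Finset.mem_Ioc]
          refine ⟨?_, hrange.2⟩
          rw [← hYv]
          refine Hy i₀ r j₀ (d r) hj1 (le_of_lt hj₀lt) hr le_rfl (Or.inl ?_)
          have h1 := hdle i₀; have h2 := hdle r
          omega
        have hinj : Set.InjOn (fun i : Fin m => Y i (d i)) ↑E := by
          intro a ha b hb hEq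
          have ha1 : 0 < d a := by
            have := Finset.mem_filter.mp (hE ▸ Finset.mem_coe.mp ha)
            exact this.2
          have hb1 : 0 < d b := by
            have := Finset.mem_filter.mp (hE ▸ Finset.mem_coe.mp hb)
            exact this.2
          have hEq' : Y a (d a) = Y b (d b) := hEq
          have h1v := stmt10_valRange hd hYnum a (d a) ha1 le_rfl
          have pa : 1 ≤ d a ∧ d a ≤ d a ∧ Y a (d a) = Y a (d a) := ⟨ha1, le_rfl, rfl⟩
          have pb : 1 ≤ d b ∧ d b ≤ d b ∧ Y b (d b) = Y a (d a) := ⟨hb1, le_rfl, hEq'.symm⟩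
          have huniq : (a, d a) = (b, d b) := (hYnum (Y a (d a)) h1v.1 h1v.2).unique pa pb
          exact congrArg Prod.fst huniq
        have hcard1 : (E.image (fun i => Y i (d i))).card = pB := by
          rw [Finset.card_image_of_injOn hinj, hEcard]
        have hcard2 := Finset.card_le_card hsub
        rw [hcard1, Nat.card_Ioc] at hcard2
        have hpB1 : 1 ≤ pB := by
          rw [← hEcard]
          exact Finset.card_pos.mpr
            ⟨i₀, hE ▸ Finset.mem_filter.mpr ⟨Finset.mem_univ _, by omega⟩⟩
        omega
    · -- condition (iii)
      intro i i' j j' h1 h1' hlt hpos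
      have hne' : Y i' (j' + 1) ≠ 0 := by omega
      have hb' := (hsupp i' (j' + 1)).mp hne'
      have hne : Y i (j + 1) ≠ 0 := by omega
      have hb := (hsupp i (j + 1)).mp hne
      refine ⟨?_, ?_⟩
      · have h := (hsupp i' j').mpr ⟨h1', by omega⟩
        omega
      · have hdi := hdle i; have hdi' := hdle i'
        rcases Nat.lt_trichotomy (j + (n - d i)) (j' + (n - d i')) with hc | hc | hc
        · exfalso
          have h := Hy i i' (j + 1) (j' + 1) (by omega) hb.2 (by omega) hb'.2
            (Or.inl (by omega))
          omega
        · by_cases hii0 : i = i'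
          · exfalso
            subst hii0
            have hjj : j = j' := by omega
            subst hjj
            omega
          · have hne2 : σ.symm i ≠ σ.symm i' := fun h => hii0 (σ.symm.injective h)
            rcases lt_or_gt_of_ne hne2 with hσ | hσ
            · exfalso
              have h := Hy i i' (j + 1) (j' + 1) (by omega) hb.2 (by omega) hb'.2
                (Or.inr ⟨by omega, hσ⟩)
              omega
            · exact Hy i' i j' j h1' (by omega) h1 (by omega) (Or.inr ⟨by omega, hσ⟩)
        · exact Hy i' i j' j h1' (by omega) h1 (by omega) (Or.inl (by omega))
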